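/- Let X be a finite metric space with n ≥ 1 points, and let k be the least positive integer such that n ≤ k(k−1)/2. Then there exists an isometric embedding f of X into the Gromov–Hausdorff space (the space of isometry classes of nonempty compact metric spaces with the Gromov–Hausdorff distance) such that for every x ∈ X, the image f(x) is the isometry class of a metric space with exactly k points. -/

import Mathlib

open GromovHausdorff Metric Set

namespace GHEmbedAux

/-- From the optimal coupling: a map with distortion at most `2 * ghDist`. -/
theorem exists_almost_isometry (A : Type) [MetricSpace A] [CompactSpace A] [Nonempty A]
    (B : Type) [MetricSpace B] [CompactSpace B] [Nonempty B] :
    ∃ Φ : A → B, ∀ a a' : A,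
      |dist a a' - dist (Φ a) (Φ a')| ≤ 2 * ghDist A B := by
  have hl := isometry_optimalGHInjl A B
  have hr := isometry_optimalGHInjr A B
  have hcl : IsCompact (range (optimalGHInjl A B)) := isCompact_range hl.continuous
  have hcr : IsCompact (range (optimalGHInjr A B)) := isCompact_range hr.continuous
  have hfin : EMetric.hausdorffEdist (range (optimalGHInjl A B)) (range (optimalGHInjr A B)) ≠ ⊤ :=
    hausdorffEdist_ne_top_of_nonempty_of_bounded (range_nonempty _) (range_nonempty _)
      hcl.isBounded hcr.isBounded
  have key : ∀ a : A, ∃ b : B, dist (optimalGHInjl A B a) (optimalGHInjr A B b) ≤ ghDist A B := by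
    intro a
    have h1 : infDist (optimalGHInjl A B a) (range (optimalGHInjr A B)) ≤ ghDist A B := by
      rw [← hausdorffDist_optimal]
      exact infDist_le_hausdorffDist_of_mem (mem_range_self a) hfin
    obtain ⟨y, hy, hyd⟩ := hcr.exists_infDist_eq_dist (range_nonempty _) (optimalGHInjl A B a)
    obtain ⟨b, rfl⟩ := hy
    exact ⟨b, by rw [← hyd]; exact h1⟩
  choose Φ hΦ using key
  refine ⟨Φ, fun a a' => ?_⟩
  have e1 : dist a a' = dist (optimalGHInjl A B a) (optimalGHInjl A B a') := (hl.dist_eq a a').symm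
  have e2 : dist (Φ a) (Φ a') = dist (optimalGHInjr A B (Φ a)) (optimalGHInjr A B (Φ a')) :=
    (hr.dist_eq _ _).symm
  rw [e1, e2]
  calc |dist (optimalGHInjl A B a) (optimalGHInjl A B a') -
        dist (optimalGHInjr A B (Φ a)) (optimalGHInjr A B (Φ a'))|
      = dist (dist (optimalGHInjl A B a) (optimalGHInjl A B a'))
          (dist (optimalGHInjr A B (Φ a)) (optimalGHInjr A B (Φ a'))) := (Real.dist_eq _ _).symm
    _ ≤ dist (optimalGHInjl A B a) (optimalGHInjr A B (Φ a)) +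
          dist (optimalGHInjl A B a') (optimalGHInjr A B (Φ a')) := dist_dist_dist_le _ _ _ _
    _ ≤ ghDist A B + ghDist A B := add_le_add (hΦ a) (hΦ a')
    _ = 2 * ghDist A B := by ring

theorem ghDist_le_of_equiv (A : Type) [MetricSpace A] [CompactSpace A] [Nonempty A]
    (B : Type) [MetricSpace B] [CompactSpace B] [Nonempty B]
    (e : A ≃ B) (ε : ℝ)
    (H : ∀ a a' : A, |dist a a' - dist (e a) (e a')| ≤ ε) :
    ghDist A B ≤ ε / 2 := by
  have h := ghDist_le_of_approx_subsets (X := A) (Y := B) (s := (univ : Set A))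
    (fun a => e a) (ε₁ := 0) (ε₂ := ε) (ε₃ := 0)
    (fun x => ⟨x, mem_univ x, by simp⟩)
    (fun y => ⟨⟨e.symm y, mem_univ _⟩, by simp⟩)
    (fun a a' => H a a')
  linarith

/-- A metric space structure on `Fin k` from a distance with values in `[C, 2C]`
off the diagonal. -/
noncomputable def finMetric (k : ℕ) (d : Fin k → Fin k → ℝ) (C : ℝ)
    (h0 : ∀ i, d i i = 0) (hsymm : ∀ i j, d i j = d j i)
    (hC : 0 < C) (hlow : ∀ i j, i ≠ j → C ≤ d i j) (hhigh : ∀ i j, i ≠ j → d i j ≤ 2 * C) :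
    MetricSpace (Fin k) where
  dist := d
  dist_self := h0
  dist_comm := hsymm
  dist_triangle x y z := by
    show d x z ≤ d x y + d y z
    have hnn : ∀ i j, 0 ≤ d i j := by
      intro i j
      by_cases h : i = j
      · simp [h, h0]
      · linarith [hlow i j h]
    by_cases hxz : x = z
    · subst hxz; rw [h0]; linarith [hnn x y, hnn y x]
    · by_cases hxy : x = y
      · subst hxy; rw [h0]; linarith [hnn x z]
      · by_cases hyz : y = z
        · subst hyz; rw [h0]; linarith [hnn x y]
        · calc d x z ≤ 2 * C := hhigh x z hxz
            _ ≤ d x y + d y z := by linarith [hlow x y hxy, hlow y z hyz]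
  eq_of_dist_eq_zero := by
    intro x y h
    replace h : d x y = 0 := h
    by_contra hne
    have := hlow x y hne
    linarith [this, h]



/-! ### The construction -/

def code (k : ℕ) (i j : Fin k) : ℕ := (min i j : ℕ) * k + (max i j : ℕ)

theorem code_comm (k : ℕ) (i j : Fin k) : code k i j = code k j i := by
  simp [code, min_comm, max_comm]

theorem code_lt {k : ℕ} (i j : Fin k) : code k i j < k * k := by
  have h1 : (min i j : ℕ) < k := (min i j).isLt
  have h2 : (max i j : ℕ) < k := (max i j).isLt
  calc (min i j : ℕ) * k + (max i j : ℕ) < (min i j : ℕ) * k + k := by omega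
    _ = ((min i j : ℕ) + 1) * k := by ring
    _ ≤ k * k := Nat.mul_le_mul_right k h1

theorem nat_pair_inj {k a b c d : ℕ} (hb : b < k) (hd : d < k) (h : a*k+b = c*k+d) :
    a = c ∧ b = d := by
  have hk : 0 < k := by omega
  have h1 : (a*k+b) % k = b := by
    rw [Nat.add_comm, Nat.add_mul_mod_self_right]; exact Nat.mod_eq_of_lt hb
  have h2 : (c*k+d) % k = d := by
    rw [Nat.add_comm, Nat.add_mul_mod_self_right]; exact Nat.mod_eq_of_lt hd
  have hbd : b = d := by rw [← h1, ← h2, h]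
  refine ⟨?_, hbd⟩
  have hmk : a * k = c * k := by omega
  exact Nat.eq_of_mul_eq_mul_right hk hmk

theorem code_inj {k : ℕ} {i j i' j' : Fin k} (h : code k i j = code k i' j') :
    min i j = min i' j' ∧ max i j = max i' j' := by
  unfold code at h
  obtain ⟨hm, hM⟩ := nat_pair_inj (max i j).isLt (max i' j').isLt h
  exact ⟨Fin.ext hm, Fin.ext hM⟩

variable {X : Type} [MetricSpace X] {k : ℕ} (av bv : X → Fin k)

open Classical in
/-- Perturbation term encoding the distance from `x` to the point owning the pair. -/
noncomputable def mu (x : X) (i j : Fin k) : ℝ :=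
  if h : ∃ z : X, av z = min i j ∧ bv z = max i j then 2 * dist x h.choose else 0

theorem mu_comm (x : X) (i j : Fin k) : mu av bv x i j = mu av bv x j i := by
  unfold mu
  rw [min_comm i j, max_comm i j]

theorem mu_nonneg (x : X) (i j : Fin k) : 0 ≤ mu av bv x i j := by
  unfold mu
  split
  · positivity
  · exact le_rfl

theorem mu_le {c : ℝ} (hc : ∀ p q : X, dist p q ≤ c) (hc0 : 0 ≤ c) (x : X) (i j : Fin k) :
    mu av bv x i j ≤ 2 * c := by
  unfold mu
  split
  · next h => linarith [hc x h.choose]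
  · linarith

theorem mu_eq (hinj : ∀ p q : X, av p = av q → bv p = bv q → p = q)
    {z : X} {i j : Fin k} (hz1 : av z = min i j) (hz2 : bv z = max i j) (x : X) :
    mu av bv x i j = 2 * dist x z := by
  have hex : ∃ z : X, av z = min i j ∧ bv z = max i j := ⟨z, hz1, hz2⟩
  unfold mu
  rw [dif_pos hex]
  have hch := hex.choose_spec
  have : hex.choose = z := hinj _ _ (by rw [hch.1, hz1]) (by rw [hch.2, hz2])
  rw [this]

/-- The distance function of the `k`-point space associated to `x`. -/
noncomputable def rho (E : ℝ) (x : X) (i j : Fin k) : ℝ :=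
  if i = j then 0 else 5*E*(code k i j : ℝ) + (5*E*((k:ℝ)*k) + 2*E) + mu av bv x i j

theorem rho_self (E : ℝ) (x : X) (i : Fin k) : rho av bv E x i i = 0 := if_pos rfl

theorem rho_comm (E : ℝ) (x : X) (i j : Fin k) : rho av bv E x i j = rho av bv E x j i := by
  unfold rho
  by_cases h : i = j
  · simp [h]
  · rw [if_neg h, if_neg (Ne.symm h), code_comm, mu_comm]

theorem rho_ne (E : ℝ) (x : X) {i j : Fin k} (h : i ≠ j) :
    rho av bv E x i j = 5*E*(code k i j : ℝ) + (5*E*((k:ℝ)*k) + 2*E) + mu av bv x i j :=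
  if_neg h

theorem rho_low {E : ℝ} (hE : 0 < E) (x : X) {i j : Fin k} (h : i ≠ j) :
    5*E*((k:ℝ)*k) + 2*E ≤ rho av bv E x i j := by
  rw [rho_ne av bv E x h]
  have h1 : (0:ℝ) ≤ (code k i j : ℝ) := Nat.cast_nonneg _
  have h2 := mu_nonneg av bv x i j
  nlinarith

theorem rho_high {E : ℝ} (hE : 0 < E) (hd : ∀ p q : X, dist p q ≤ E - 1)
    (x : X) {i j : Fin k} (h : i ≠ j) :
    rho av bv E x i j ≤ 2 * (5*E*((k:ℝ)*k) + 2*E) := by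
  rw [rho_ne av bv E x h]
  have h1 : (code k i j : ℝ) ≤ (k:ℝ)*k := by
    have := code_lt i j
    have : (code k i j : ℝ) ≤ ((k*k : ℕ) : ℝ) := by exact_mod_cast this.le
    simpa [Nat.cast_mul] using this
  have h2 : mu av bv x i j ≤ 2 * (E - 1) := by
    have hd0 : (0:ℝ) ≤ E - 1 := le_trans dist_nonneg (hd x x)
    exact mu_le av bv hd hd0 x i j
  nlinarith

theorem rho_sub_le (E : ℝ) (x y : X) (i j : Fin k) :
    |rho av bv E x i j - rho av bv E y i j| ≤ 2 * dist x y := by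
  unfold rho
  by_cases h : i = j
  · simp [h]
  · rw [if_neg h, if_neg h]
    have heq : 5*E*(code k i j : ℝ) + (5*E*((k:ℝ)*k) + 2*E) + mu av bv x i j -
        (5*E*(code k i j : ℝ) + (5*E*((k:ℝ)*k) + 2*E) + mu av bv y i j)
        = mu av bv x i j - mu av bv y i j := by ring
    rw [heq]
    unfold mu
    by_cases hex : ∃ z : X, av z = min i j ∧ bv z = max i j
    · rw [dif_pos hex, dif_pos hex]
      have h1 : |dist x hex.choose - dist y hex.choose| ≤ dist x y :=
        abs_dist_sub_le x y hex.choose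
      have h2 : |2 * dist x hex.choose - 2 * dist y hex.choose|
          = 2 * |dist x hex.choose - dist y hex.choose| := by
        rw [← mul_sub, abs_mul, abs_of_nonneg (by norm_num : (0:ℝ) ≤ 2)]
      rw [h2]; linarith
    · rw [dif_neg hex, dif_neg hex]
      norm_num

theorem compactSpace_of_finite {α : Type} [Finite α] (m : MetricSpace α) :
    @CompactSpace α m.toPseudoMetricSpace.toUniformSpace.toTopologicalSpace :=
  @Finite.compactSpace α m.toPseudoMetricSpace.toUniformSpace.toTopologicalSpace _

end GHEmbedAux

set_option maxHeartbeats 2000000 in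
/-- Every finite metric space with `n ≥ 1` points embeds isometrically into the
Gromov–Hausdorff space so that every point of the image is the isometry class of a
metric space with exactly `k` points, where `k` is the least positive integer with
`n ≤ k(k−1)/2`. -/
theorem isometric_embedding_into_GHSpace_with_k_points
    (X : Type) [MetricSpace X] [Fintype X] (hn : 1 ≤ Fintype.card X)
    (k : ℕ) (hk : 0 < k) (hnk : 2 * Fintype.card X ≤ k * (k - 1))
    (hleast : ∀ m : ℕ, 0 < m → 2 * Fintype.card X ≤ m * (m - 1) → k ≤ m) :
    ∃ f : X → GromovHausdorff.GHSpace,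
      (∀ x x' : X, dist (f x) (f x') = dist x x') ∧
      (∀ x : X, Nat.card (f x).Rep = k) := by
  classical
  clear hleast
  have hk2 : 2 ≤ k := by
    rcases Nat.lt_or_ge k 2 with h | h
    · obtain rfl : k = 1 := by omega
      norm_num at hnk
      omega
    · exact h
  haveI hne : Nonempty (Fin k) := ⟨⟨0, by omega⟩⟩
  -- assignment of a pair `(av x, bv x)` with `av x < bv x` to each point, injectively
  obtain ⟨av, bv, hab, hinj⟩ :
      ∃ (av bv : X → Fin k), (∀ x, av x < bv x) ∧
        (∀ p q : X, av p = av q → bv p = bv q → p = q) := by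
    have hcard : Fintype.card X ≤ Fintype.card ((b : Fin k) × Fin (b : ℕ)) := by
      rw [Fintype.card_sigma]
      simp only [Fintype.card_fin]
      have h2 : (∑ b : Fin k, (b : ℕ)) * 2 = k * (k - 1) := by
        rw [Fin.sum_univ_eq_sum_range (fun i => i) k]
        exact Finset.sum_range_id_mul_two k
      omega
    obtain ⟨ι⟩ := Function.Embedding.nonempty_of_card_le hcard
    refine ⟨fun x => ⟨((ι x).2 : ℕ), lt_trans (ι x).2.isLt (ι x).1.isLt⟩,
      fun x => (ι x).1, fun x => ?_, fun p q h1 h2 => ?_⟩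
    · simpa [Fin.lt_def] using (ι x).2.isLt
    · apply ι.injective
      have hfst : (ι p).1 = (ι q).1 := h2
      have hsnd : ((ι p).2 : ℕ) = ((ι q).2 : ℕ) := congrArg Fin.val h1
      exact Sigma.ext hfst ((Fin.heq_ext_iff (congrArg Fin.val hfst)).2 hsnd)
  -- metric parameters
  set D := Metric.diam (Set.univ : Set X) with hDdef
  have hD0 : 0 ≤ D := Metric.diam_nonneg
  have hdistD : ∀ p q : X, dist p q ≤ D := fun p q =>
    Metric.dist_le_diam_of_mem isCompact_univ.isBounded (Set.mem_univ p) (Set.mem_univ q)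
  set E := D + 1 with hEdef
  have hE : 0 < E := by linarith
  have hdistE : ∀ p q : X, dist p q ≤ E - 1 := by
    intro p q; have := hdistD p q; linarith
  have hE1 : (0:ℝ) ≤ E - 1 := by linarith
  have hkk : (0:ℝ) ≤ (k:ℝ)*k := by positivity
  have hC0 : 0 < 5*E*((k:ℝ)*k) + 2*E := by nlinarith
  have hC02E : 2*E ≤ 5*E*((k:ℝ)*k) + 2*E := by nlinarith
  -- the family of metric spaces
  let M : X → MetricSpace (Fin k) := fun x =>
    GHEmbedAux.finMetric k (GHEmbedAux.rho av bv E x) (5*E*((k:ℝ)*k) + 2*E)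
      (GHEmbedAux.rho_self av bv E x) (GHEmbedAux.rho_comm av bv E x) hC0
      (fun _ _ h => GHEmbedAux.rho_low av bv hE x h)
      (fun _ _ h => GHEmbedAux.rho_high av bv hE hdistE x h)
  let fM : X → GromovHausdorff.GHSpace := fun x =>
    @GromovHausdorff.toGHSpace (Fin k) (M x) (GHEmbedAux.compactSpace_of_finite (M x)) hne
  have key : ∀ x y : X, dist (fM x) (fM y) = dist x y := by
    intro x y
    have hub : dist (fM x) (fM y) ≤ dist x y := by
      have h := @GHEmbedAux.ghDist_le_of_equiv (Fin k) (M x) (GHEmbedAux.compactSpace_of_finite (M x)) hne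
        (Fin k) (M y) (GHEmbedAux.compactSpace_of_finite (M y)) hne (Equiv.refl (Fin k)) (2 * dist x y)
        (fun a a' => GHEmbedAux.rho_sub_le av bv E x y a a')
      have h' : dist (fM x) (fM y) ≤ 2 * dist x y / 2 := h
      linarith
    have hlb : dist x y ≤ dist (fM x) (fM y) := by
      by_contra hcon
      push_neg at hcon
      obtain ⟨Φ, hΦ⟩ := @GHEmbedAux.exists_almost_isometry (Fin k) (M x) (GHEmbedAux.compactSpace_of_finite (M x)) hne
        (Fin k) (M y) (GHEmbedAux.compactSpace_of_finite (M y)) hne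
      have hΦ' : ∀ a a' : Fin k,
          |GHEmbedAux.rho av bv E x a a' - GHEmbedAux.rho av bv E y (Φ a) (Φ a')|
            ≤ 2 * dist (fM x) (fM y) := hΦ
      have hrD : dist (fM x) (fM y) < D := lt_of_lt_of_le hcon (hdistD x y)
      have hr0 : 0 ≤ dist (fM x) (fM y) := dist_nonneg
      -- Step 1: the almost-isometry is injective
      have hΦinj : ∀ a a' : Fin k, a ≠ a' → Φ a ≠ Φ a' := by
        intro a a' ha hEq
        have h1 := hΦ' a a'
        have h2 : GHEmbedAux.rho av bv E y (Φ a) (Φ a') = 0 := by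
          rw [hEq, GHEmbedAux.rho_self]
        rw [h2, sub_zero] at h1
        have h4 : GHEmbedAux.rho av bv E x a a' ≤ 2 * dist (fM x) (fM y) :=
          le_trans (le_abs_self _) h1
        have h3 := GHEmbedAux.rho_low av bv hE x ha
        linarith
      -- Step 2: the almost-isometry preserves the pair codes
      have hcode : ∀ a a' : Fin k, a ≠ a' →
          GHEmbedAux.code k a a' = GHEmbedAux.code k (Φ a) (Φ a') := by
        intro a a' ha
        have hb := hΦinj a a' ha
        have h1 := hΦ' a a'
        rw [GHEmbedAux.rho_ne av bv E x ha, GHEmbedAux.rho_ne av bv E y hb] at h1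
        obtain ⟨hL, hR⟩ := abs_le.mp h1
        have hmu1 := GHEmbedAux.mu_nonneg av bv x a a'
        have hmu2 := GHEmbedAux.mu_nonneg av bv y (Φ a) (Φ a')
        have hmu1' := GHEmbedAux.mu_le av bv hdistE hE1 x a a'
        have hmu2' := GHEmbedAux.mu_le av bv hdistE hE1 y (Φ a) (Φ a')
        set c1 := GHEmbedAux.code k a a' with hc1
        set c2 := GHEmbedAux.code k (Φ a) (Φ a') with hc2
        have h5E : (0:ℝ) < 5 * E := by linarith
        have ht1 : 5*E*((c1:ℝ) - c2) < 5*E*1 := by nlinarith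
        have ht2 : 5*E*((c2:ℝ) - c1) < 5*E*1 := by nlinarith
        have htt1 : (c1:ℝ) - c2 < 1 := by
          have := (mul_lt_mul_iff_right₀ h5E).mp ht1; linarith
        have htt2 : (c2:ℝ) - c1 < 1 := by
          have := (mul_lt_mul_iff_right₀ h5E).mp ht2; linarith
        have hi1 : (c1:ℤ) - c2 < 1 := by exact_mod_cast (by push_cast; linarith : ((c1:ℤ):ℝ) - ((c2:ℤ):ℝ) < 1)
        have hi2 : (c2:ℤ) - c1 < 1 := by exact_mod_cast (by push_cast; linarith : ((c2:ℤ):ℝ) - ((c1:ℤ):ℝ) < 1)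
        omega
      -- Step 3: contradiction at the pair of `x`
      have hltx : av x < bv x := hab x
      have hnex : av x ≠ bv x := ne_of_lt hltx
      have hmin : min (av x) (bv x) = av x := min_eq_left hltx.le
      have hmax : max (av x) (bv x) = bv x := max_eq_right hltx.le
      have hmux : GHEmbedAux.mu av bv x (av x) (bv x) = 2 * dist x x :=
        GHEmbedAux.mu_eq av bv hinj (by rw [hmin]) (by rw [hmax]) x
      have hbne : Φ (av x) ≠ Φ (bv x) := hΦinj _ _ hnex
      obtain ⟨hminI, hmaxI⟩ := GHEmbedAux.code_inj (hcode (av x) (bv x) hnex)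
      have hmuy : GHEmbedAux.mu av bv y (Φ (av x)) (Φ (bv x)) = 2 * dist y x :=
        GHEmbedAux.mu_eq av bv hinj (z := x) (by rw [← hminI, hmin]) (by rw [← hmaxI, hmax]) y
      have h1 := hΦ' (av x) (bv x)
      rw [GHEmbedAux.rho_ne av bv E x hnex, GHEmbedAux.rho_ne av bv E y hbne,
        hmux, hmuy, ← hcode (av x) (bv x) hnex, dist_self] at h1
      have h3 : 5*E*((GHEmbedAux.code k (av x) (bv x)):ℝ) + (5*E*((k:ℝ)*k) + 2*E) + 2*0 -
          (5*E*((GHEmbedAux.code k (av x) (bv x)):ℝ) + (5*E*((k:ℝ)*k) + 2*E) + 2*dist y x)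
          = -(2*dist y x) := by ring
      rw [h3, abs_neg, abs_of_nonneg (by positivity)] at h1
      have h4 : dist y x = dist x y := dist_comm y x
      linarith
    exact le_antisymm hub hlb
  refine ⟨fM, key, ?_⟩
  intro x
  have h1 : GromovHausdorff.toGHSpace ((fM x).Rep) = fM x := (fM x).toGHSpace_rep
  have h3 : GromovHausdorff.toGHSpace ((fM x).Rep) =
      @GromovHausdorff.toGHSpace (Fin k) (M x) (GHEmbedAux.compactSpace_of_finite (M x)) hne := h1
  have hiso := (@GromovHausdorff.toGHSpace_eq_toGHSpace_iff_isometryEquiv ((fM x).Rep)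
    (by infer_instance) (by infer_instance) (by infer_instance)
    (Fin k) (M x) (GHEmbedAux.compactSpace_of_finite (M x)) hne).mp h3
  letI := M x
  obtain ⟨e⟩ := hiso
  rw [Nat.card_congr e.toEquiv]
  simp
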